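/- With U = (1/√n)(nI − J), the matrix W = [U⊗e_n, e_n⊗U][U⊗e_n, e_n⊗U]ᵀ equals I_n ⊗ nJ_n + J_n ⊗ (nI_n − 2J_n), is positive semidefinite of order n², and has rank 2(n−1). -/

import Mathlib

open Matrix
open scoped Kronecker

/-- With `U = (1/√n)(nI − J)`, the matrix
`W = [U⊗e_n, e_n⊗U][U⊗e_n, e_n⊗U]ᵀ = (U⊗e_n)(U⊗e_n)ᵀ + (e_n⊗U)(e_n⊗U)ᵀ`
equals `I_n ⊗ nJ_n + J_n ⊗ (nI_n − 2J_n)`, is positive semidefinite of order `n²`,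
and has rank `2(n−1)`. -/
theorem qap_exposing_vector {n : ℕ} (hn : 2 ≤ n) :
    let U : Matrix (Fin n) (Fin n) ℝ :=
      (Real.sqrt n)⁻¹ •
        ((n : ℝ) • (1 : Matrix (Fin n) (Fin n) ℝ) - Matrix.of fun _ _ => (1 : ℝ))
    let E : Matrix (Fin n) (Fin 1) ℝ := Matrix.of fun _ _ => (1 : ℝ)
    let J : Matrix (Fin n) (Fin n) ℝ := Matrix.of fun _ _ => (1 : ℝ)
    let W : Matrix (Fin n × Fin n) (Fin n × Fin n) ℝ :=
      (U ⊗ₖ E) * (U ⊗ₖ E)ᵀ + (E ⊗ₖ U) * (E ⊗ₖ U)ᵀ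
    W = (1 : Matrix (Fin n) (Fin n) ℝ) ⊗ₖ ((n : ℝ) • J) +
          J ⊗ₖ ((n : ℝ) • (1 : Matrix (Fin n) (Fin n) ℝ) - (2 : ℝ) • J) ∧
      W.PosSemidef ∧ W.rank = 2 * (n - 1) := by
  intro U E J W
  have hn0 : (0:ℝ) < n := by positivity
  have hnne : (n:ℝ) ≠ 0 := ne_of_gt hn0
  set P : Matrix (Fin n) (Fin n) ℝ :=
    (n : ℝ) • (1 : Matrix (Fin n) (Fin n) ℝ) - J with hP
  have hJJ : J * J = (n:ℝ) • J := by
    ext i j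
    simp [J, mul_apply]
  have hEE : E * Eᵀ = J := by
    ext i j
    simp [E, J, mul_apply]
  have hPJ : P * J = 0 := by
    rw [hP, sub_mul, smul_mul_assoc, one_mul, hJJ, sub_self]
  have hJP : J * P = 0 := by
    rw [hP, mul_sub, mul_smul_comm, mul_one, hJJ, sub_self]
  have hPP : P * P = (n:ℝ) • P := by
    rw [hP, mul_sub, mul_smul_comm, mul_one, hPJ, smul_sub]
    simp [hP]
  have hUt : Uᵀ = U := by
    ext i j
    rcases eq_or_ne i j with h | h
    · subst h; rfl
    · simp [U, Matrix.one_apply, h, h.symm]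
  have hsq : (Real.sqrt n)⁻¹ * (Real.sqrt n)⁻¹ = (n:ℝ)⁻¹ := by
    rw [← mul_inv, Real.mul_self_sqrt hn0.le]
  have hUU : U * Uᵀ = P := by
    rw [hUt]
    show ((Real.sqrt n)⁻¹ • P) * ((Real.sqrt n)⁻¹ • P) = P
    rw [smul_mul_smul_comm, hsq, hPP, smul_smul, inv_mul_cancel₀ hnne, one_smul]
  have hW : W = P ⊗ₖ J + J ⊗ₖ P := by
    show (U ⊗ₖ E) * (U ⊗ₖ E)ᵀ + (E ⊗ₖ U) * (E ⊗ₖ U)ᵀ = _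
    rw [← kroneckerMap_transpose, ← kroneckerMap_transpose, ← mul_kronecker_mul,
      ← mul_kronecker_mul, hUU, hEE]
  refine ⟨?_, ?_, ?_⟩
  · -- identity
    rw [hW, hP]
    ext ⟨i, a⟩ ⟨j, b⟩
    rcases eq_or_ne i j with h | h <;> rcases eq_or_ne a b with h' | h' <;>
      simp [J, kroneckerMap_apply, Matrix.one_apply, h, h'] <;> ring
  · -- PSD
    have h1 : ((U ⊗ₖ E) * (U ⊗ₖ E)ᵀ).PosSemidef := by
      rw [← conjTranspose_eq_transpose_of_trivial]
      exact posSemidef_self_mul_conjTranspose _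
    have h2 : ((E ⊗ₖ U) * (E ⊗ₖ U)ᵀ).PosSemidef := by
      rw [← conjTranspose_eq_transpose_of_trivial]
      exact posSemidef_self_mul_conjTranspose _
    exact h1.add h2
  · -- rank
    have hWW : W * W = ((n:ℝ)^2) • W := by
      rw [hW, add_mul, mul_add, mul_add, ← mul_kronecker_mul, ← mul_kronecker_mul,
        ← mul_kronecker_mul, ← mul_kronecker_mul, hPP, hJJ, hPJ, hJP,
        zero_kronecker, smul_kronecker, smul_kronecker, kronecker_smul,
        kronecker_smul, smul_smul, smul_smul, sq, smul_add]
      abel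
    set c : ℝ := ((n:ℝ)^2)⁻¹ with hc
    have hcne : c ≠ 0 := by positivity
    have hcn : c * (n:ℝ)^2 = 1 := inv_mul_cancel₀ (by positivity)
    set M : Matrix (Fin n × Fin n) (Fin n × Fin n) ℝ := c • W with hM
    have hMM : M * M = M := by
      rw [hM, smul_mul_smul_comm, hWW, smul_smul, mul_comm c, mul_assoc, hcn,
        mul_one]
    have htrP : P.trace = (n:ℝ)^2 - n := by
      simp [hP, trace_sub, trace_smul, trace_one, J, Matrix.trace, Matrix.diag]
      ring
    have htrJ : J.trace = (n:ℝ) := by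
      simp [J, Matrix.trace, Matrix.diag]
    have htrW : W.trace = 2 * ((n:ℝ)^2 * ((n:ℝ) - 1)) := by
      rw [hW, trace_add, trace_kronecker, trace_kronecker, htrP, htrJ]
      ring
    have htrM : M.trace = 2 * ((n:ℝ) - 1) := by
      rw [hM, trace_smul, htrW, smul_eq_mul, hc]
      field_simp
    have hrk : M.rank = W.rank := by
      rw [hM]
      unfold Matrix.rank
      rw [← Matrix.toLin'_apply', ← Matrix.toLin'_apply', _root_.map_smul,
        LinearMap.range_smul _ _ hcne]
    rw [← hrk]
    set f := Matrix.toLin' M with hf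
    have hff : f ∘ₗ f = f := by
      rw [hf]
      simp only [Matrix.toLin'_apply']
      rw [← Matrix.mulVecLin_mul, hMM]
    have hproj : LinearMap.IsProj (LinearMap.range f) f := by
      obtain ⟨p, hp⟩ := (LinearMap.isProj_iff_isIdempotentElem f).mpr hff
      have hpr : p = LinearMap.range f := by
        apply le_antisymm
        · intro x hx
          rw [← hp.map_id x hx]; exact LinearMap.mem_range_self f x
        · rintro x ⟨y, rfl⟩
          exact hp.map_mem y
      exact hpr ▸ hp
    have htrf : LinearMap.trace ℝ (Fin n × Fin n → ℝ) f = M.trace := by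
      rw [LinearMap.trace_eq_matrix_trace ℝ (Pi.basisFun ℝ (Fin n × Fin n)) f,
        LinearMap.toMatrix_eq_toMatrix', hf, LinearMap.toMatrix'_toLin']
    have hpt := hproj.trace
    rw [htrf, htrM] at hpt
    have hrank : (M.rank : ℝ) = 2 * ((n:ℝ) - 1) := by
      rw [Matrix.rank, ← Matrix.toLin'_apply', ← hf, ← hpt]
    have h1n : 1 ≤ n := le_trans (by norm_num) hn
    have hcast : ((2 * (n - 1) : ℕ) : ℝ) = 2 * ((n:ℝ) - 1) := by
      push_cast [Nat.cast_sub h1n]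
      ring
    exact_mod_cast hrank.trans hcast.symm
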